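/- Let x ∈ ℝ^N be fixed and for τ > 0 let p(τ) be the softmax of x/τ. Define the variance V(τ) = (1/N) Σ_i (p_i - 1/N)². Then dV/dτ = -(2/(N τ²)) Σ_i p_i² (x_i - μ), where μ = Σ_i p_i x_i; consequently V is monotonically nonincreasing in τ. -/

import Mathlib

set_option maxHeartbeats 1000000

lemma softmax_sum_expand (n : ℕ) (e xv : Fin n → ℝ) (a b c d : ℝ) :
    ∑ i, (a * (e i ^ 2 * xv i) + b * e i ^ 2 + c * (e i * xv i) + d * e i)
      = a * (∑ i, e i ^ 2 * xv i) + b * (∑ i, e i ^ 2)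
        + c * (∑ i, e i * xv i) + d * (∑ i, e i) := by
  simp [Finset.sum_add_distrib, Finset.mul_sum]

lemma softmax_deriv (N : ℕ) (hN : 0 < N) (x : Fin N → ℝ) (τ : ℝ) (hτ : 0 < τ) :
    HasDerivAt
      (fun t => (1 / (N : ℝ)) * ∑ i, (Real.exp (x i / t) / (∑ j, Real.exp (x j / t)) - 1 / (N : ℝ)) ^ 2)
      (-(2 / ((N : ℝ) * τ ^ 2)) *
        ∑ i, (Real.exp (x i / τ) / (∑ j, Real.exp (x j / τ))) ^ 2 *
          (x i - ∑ j, (Real.exp (x j / τ) / (∑ k, Real.exp (x k / τ))) * x j)) τ := by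
  have hτ0 : τ ≠ 0 := ne_of_gt hτ
  set e : Fin N → ℝ := fun i => Real.exp (x i / τ) with he
  set A : ℝ := ∑ j, e j with hA
  have hApos : 0 < A := Finset.sum_pos (fun j _ => Real.exp_pos _)
    (Finset.univ_nonempty_iff.2 ⟨⟨0, hN⟩⟩)
  have hA0 : A ≠ 0 := ne_of_gt hApos
  have hNR : (N : ℝ) ≠ 0 := Nat.cast_ne_zero.2 hN.ne'
  set B : ℝ := ∑ j, e j * x j with hB
  -- derivative of each exponential
  have hE : ∀ i, HasDerivAt (fun t => Real.exp (x i / t)) (e i * (x i * -(τ ^ 2)⁻¹)) τ := by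
    intro i
    have h1 : HasDerivAt (fun t : ℝ => x i / t) (x i * -(τ ^ 2)⁻¹) τ := by
      simpa [div_eq_mul_inv] using (hasDerivAt_inv hτ0).const_mul (x i)
    simpa [he] using h1.exp
  have hSder : (∑ j, e j * (x j * -(τ ^ 2)⁻¹)) = -(τ ^ 2)⁻¹ * B := by
    rw [hB, Finset.mul_sum]
    exact Finset.sum_congr rfl fun j _ => by ring
  have hS : HasDerivAt (fun t => ∑ j, Real.exp (x j / t)) (-(τ ^ 2)⁻¹ * B) τ := by
    rw [← hSder]; exact HasDerivAt.fun_sum fun j _ => hE j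
  have hSτ : (∑ j, Real.exp (x j / τ)) = A := rfl
  have hterm : ∀ i, HasDerivAt
      (fun t => (Real.exp (x i / t) / (∑ j, Real.exp (x j / t)) - 1 / (N : ℝ)) ^ 2)
      (2 * (e i / A - 1 / (N : ℝ)) *
        ((e i * (x i * -(τ ^ 2)⁻¹) * A - e i * (-(τ ^ 2)⁻¹ * B)) / A ^ 2)) τ := by
    intro i
    have h1 : HasDerivAt (fun t => Real.exp (x i / t) / (∑ j, Real.exp (x j / t)))
        ((e i * (x i * -(τ ^ 2)⁻¹) * A - e i * (-(τ ^ 2)⁻¹ * B)) / A ^ 2) τ := by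
      have := (hE i).fun_div hS (by rw [hSτ]; exact hA0)
      simpa [hSτ, he] using this
    have h2 := (h1.sub_const (1 / (N : ℝ))).fun_pow 2
    refine h2.congr_deriv ?_
    have : e i / A - 1 / (N : ℝ) = Real.exp (x i / τ) / (∑ j, Real.exp (x j / τ)) - 1 / (N : ℝ) := by
      rw [hSτ]
    push_cast
    rw [← this]
    ring
  have hD : HasDerivAt
      (fun t => (1 / (N : ℝ)) * ∑ i, (Real.exp (x i / t) / (∑ j, Real.exp (x j / t)) - 1 / (N : ℝ)) ^ 2)
      ((1 / (N : ℝ)) * ∑ i, (2 * (e i / A - 1 / (N : ℝ)) *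
        ((e i * (x i * -(τ ^ 2)⁻¹) * A - e i * (-(τ ^ 2)⁻¹ * B)) / A ^ 2))) τ :=
    HasDerivAt.const_mul _ (HasDerivAt.fun_sum fun i _ => hterm i)
  -- rewrite the derivative value
  have hmu : (∑ j, (Real.exp (x j / τ) / (∑ k, Real.exp (x k / τ))) * x j) = B / A := by
    rw [hB, Finset.sum_div]
    exact Finset.sum_congr rfl fun j _ => by rw [hSτ]; ring
  have hval : ((1 / (N : ℝ)) * ∑ i, (2 * (e i / A - 1 / (N : ℝ)) *
        ((e i * (x i * -(τ ^ 2)⁻¹) * A - e i * (-(τ ^ 2)⁻¹ * B)) / A ^ 2)))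
      = -(2 / ((N : ℝ) * τ ^ 2)) *
        ∑ i, (Real.exp (x i / τ) / (∑ j, Real.exp (x j / τ))) ^ 2 *
          (x i - ∑ j, (Real.exp (x j / τ) / (∑ k, Real.exp (x k / τ))) * x j) := by
    rw [hmu]
    have hlhs : ∑ i, (2 * (e i / A - 1 / (N : ℝ)) *
          ((e i * (x i * -(τ ^ 2)⁻¹) * A - e i * (-(τ ^ 2)⁻¹ * B)) / A ^ 2))
        = ∑ i, ((-(2 / (τ ^ 2 * A ^ 2))) * (e i ^ 2 * x i) + (2 * B / (τ ^ 2 * A ^ 3)) * e i ^ 2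
            + (2 / ((N : ℝ) * τ ^ 2 * A)) * (e i * x i) + (-(2 * B / ((N : ℝ) * τ ^ 2 * A ^ 2))) * e i) := by
      refine Finset.sum_congr rfl fun i _ => ?_
      field_simp
      ring
    have hrhs : ∑ i, (Real.exp (x i / τ) / (∑ j, Real.exp (x j / τ))) ^ 2 * (x i - B / A)
        = ∑ i, ((1 / A ^ 2) * (e i ^ 2 * x i) + (-(B / A ^ 3)) * e i ^ 2
            + (0 : ℝ) * (e i * x i) + (0 : ℝ) * e i) := by
      refine Finset.sum_congr rfl fun i _ => ?_
      rw [hSτ]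
      field_simp
      ring
    rw [hlhs, hrhs, softmax_sum_expand, softmax_sum_expand, ← hB, ← hA]
    set C : ℝ := ∑ i, e i ^ 2 * x i with hC
    set D2 : ℝ := ∑ i, e i ^ 2 with hD2
    clear_value A B C D2
    clear hterm hD hlhs hrhs hmu hS hSder hE hSτ hB hC hD2 hA he hApos
    field_simp
    ring
  rw [← hval]
  exact hD

lemma softmax_aux_nonneg (N : ℕ) (q x : Fin N → ℝ) (hq0 : ∀ i, 0 ≤ q i)
    (hq1 : ∑ i, q i = 1) (hmono : ∀ i j, x i ≤ x j → q i ≤ q j) :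
    0 ≤ ∑ i, (q i) ^ 2 * (x i - ∑ j, q j * x j) := by
  set Q := ∑ i, (q i) ^ 2 * (x i - ∑ j, q j * x j) with hQdef
  have hQ : Q = ∑ i, ∑ j, q i ^ 2 * q j * (x i - x j) := by
    refine Finset.sum_congr rfl fun i _ => ?_
    have : ∑ j, q i ^ 2 * q j * (x i - x j)
        = q i ^ 2 * (x i * (∑ j, q j) - ∑ j, q j * x j) := by
      rw [mul_sub, Finset.mul_sum, Finset.mul_sum, Finset.mul_sum, ← Finset.sum_sub_distrib]
      exact Finset.sum_congr rfl fun j _ => by ring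
    rw [this, hq1]; ring
  have h2Q : 2 * Q = ∑ i, ∑ j, q i * q j * ((q i - q j) * (x i - x j)) := by
    have hswap : Q = ∑ i, ∑ j, q j ^ 2 * q i * (x j - x i) := by
      rw [hQ]; exact Finset.sum_comm
    calc 2 * Q = Q + Q := two_mul Q
    _ = ∑ i, ∑ j, (q i ^ 2 * q j * (x i - x j) + q j ^ 2 * q i * (x j - x i)) := by
        nth_rewrite 1 [hQ]; nth_rewrite 1 [hswap]
        rw [← Finset.sum_add_distrib]
        exact Finset.sum_congr rfl fun i _ => (Finset.sum_add_distrib).symm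
    _ = ∑ i, ∑ j, q i * q j * ((q i - q j) * (x i - x j)) := by
        refine Finset.sum_congr rfl fun i _ => Finset.sum_congr rfl fun j _ => by ring
  have hnn : 0 ≤ 2 * Q := by
    rw [h2Q]
    refine Finset.sum_nonneg fun i _ => Finset.sum_nonneg fun j _ => ?_
    refine mul_nonneg (mul_nonneg (hq0 i) (hq0 j)) ?_
    rcases le_total (x i) (x j) with h | h
    · have h1 : q i - q j ≤ 0 := sub_nonpos.2 (hmono i j h)
      have h2 : x i - x j ≤ 0 := sub_nonpos.2 h
      have := mul_nonneg (neg_nonneg.2 h1) (neg_nonneg.2 h2)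
      calc (0:ℝ) ≤ -(q i - q j) * -(x i - x j) := this
      _ = (q i - q j) * (x i - x j) := by ring
    · exact mul_nonneg (sub_nonneg.2 (hmono j i h)) (sub_nonneg.2 h)
  linarith

theorem softmax_probability_variance_deriv_and_antitone
    (N : ℕ) (x : Fin N → ℝ)
    (p : ℝ → Fin N → ℝ)
    (hp : ∀ t i, p t i = Real.exp (x i / t) / ∑ j, Real.exp (x j / t))
    (V : ℝ → ℝ)
    (hV : ∀ t, V t = (1 / (N : ℝ)) * ∑ i, (p t i - 1 / (N : ℝ)) ^ 2) :
    (∀ τ : ℝ, 0 < τ →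
      HasDerivAt V
        (-(2 / ((N : ℝ) * τ ^ 2)) *
          ∑ i, (p τ i) ^ 2 * (x i - ∑ j, p τ j * x j)) τ) ∧
    AntitoneOn V (Set.Ioi (0 : ℝ)) := by
  rcases Nat.eq_zero_or_pos N with hN | hN
  · -- degenerate case N = 0
    subst hN
    have hV0 : V = fun _ => (0 : ℝ) := funext fun t => by rw [hV]; simp
    constructor
    · intro τ hτ
      have h0 : HasDerivAt V 0 τ := by rw [hV0]; exact hasDerivAt_const τ 0
      have : (-(2 / ((0 : ℕ) * τ ^ 2 : ℝ)) *
          ∑ i : Fin 0, (p τ i) ^ 2 * (x i - ∑ j, p τ j * x j)) = 0 := by simp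
      rw [this]
      exact h0
    · rw [hV0]; exact antitoneOn_const
  · -- main case
    have hVfun : V = fun t => (1 / (N : ℝ)) *
        ∑ i, (Real.exp (x i / t) / (∑ j, Real.exp (x j / t)) - 1 / (N : ℝ)) ^ 2 := by
      funext t; rw [hV]
      exact congrArg _ (Finset.sum_congr rfl fun i _ => by rw [hp])
    have hderiv : ∀ τ : ℝ, 0 < τ →
        HasDerivAt V
          (-(2 / ((N : ℝ) * τ ^ 2)) *
            ∑ i, (p τ i) ^ 2 * (x i - ∑ j, p τ j * x j)) τ := by
      intro τ hτ
      have h := softmax_deriv N hN x τ hτ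
      rw [← hVfun] at h
      have heq : (∑ i, (Real.exp (x i / τ) / (∑ j, Real.exp (x j / τ))) ^ 2 *
            (x i - ∑ j, (Real.exp (x j / τ) / (∑ k, Real.exp (x k / τ))) * x j))
          = ∑ i, (p τ i) ^ 2 * (x i - ∑ j, p τ j * x j) := by
        refine Finset.sum_congr rfl fun i _ => ?_
        rw [hp τ i]
        congr 1
        congr 1
        exact Finset.sum_congr rfl fun j _ => by rw [hp τ j]
      rw [heq] at h
      exact h
    refine ⟨hderiv, ?_⟩
    -- nonnegativity of the key sum
    have hkey : ∀ τ : ℝ, 0 < τ → 0 ≤ ∑ i, (p τ i) ^ 2 * (x i - ∑ j, p τ j * x j) := by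
      intro τ hτ
      have hApos : 0 < ∑ j, Real.exp (x j / τ) := Finset.sum_pos (fun j _ => Real.exp_pos _)
        (Finset.univ_nonempty_iff.2 ⟨⟨0, hN⟩⟩)
      refine softmax_aux_nonneg N (p τ) x (fun i => ?_) ?_ (fun i j hij => ?_)
      · rw [hp]; positivity
      · rw [Finset.sum_congr rfl fun i (_ : i ∈ Finset.univ) => hp τ i]
        rw [← Finset.sum_div, div_self (ne_of_gt hApos)]
      · rw [hp, hp]
        exact (div_le_div_iff_of_pos_right hApos).2 (Real.exp_le_exp.2 ((div_le_div_iff_of_pos_right hτ).2 hij))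
    have hanti : AntitoneOn V (Set.Ioi (0 : ℝ)) := by
      have hconv : Convex ℝ (Set.Ioi (0 : ℝ)) := convex_Ioi 0
      have hint : interior (Set.Ioi (0 : ℝ)) = Set.Ioi 0 := interior_Ioi
      refine antitoneOn_of_deriv_nonpos hconv ?_ ?_ ?_
      · intro t ht
        exact ((hderiv t ht).differentiableAt.continuousAt).continuousWithinAt
      · rw [hint]
        intro t ht
        exact ((hderiv t ht).differentiableAt).differentiableWithinAt
      · rw [hint]
        intro t ht
        rw [(hderiv t ht).deriv]
        have h1 : 0 ≤ 2 / ((N : ℝ) * t ^ 2) := by positivity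
        have h2 := hkey t ht
        have := mul_nonneg h1 h2
        linarith
    exact hanti
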